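/- Fix n ≥ 1, γ ∈ ℝ^{k+1}, and M > 0. Let x_1, …, x_n ∈ ℝ^k be fixed presence covariates and x_{n+1}, x_{n+2}, … ∈ ℝ^k pseudo-absence covariates, all with ‖x_i‖ ≤ M. For each m > n let p_i(m) be the pseudo-absence logistic probabilities, with log(p_i/(1−p_i)) = γ_0 − log(m−n) + Σ_{j=1}^k x_{ij} γ_j, and let λ_i(γ − J_m) = exp(γ_0 − log m + Σ_j x_{ij} γ_j). Then there exist C > 0 and m_0 such that for all m ≥ m_0 and all i ≤ m, |log p_i(m) − log λ_i(γ − J_m)| ≤ C/m, and consequently |Σ_{i=1}^m p_i(m) − Σ_{i=1}^m λ_i(γ − J_m)| ≤ C/m. That is, under the intercept-shifted parametrization β = γ − J_m, the logistic success probabilities agree with the Poisson point-process intensities uniformly to order O(m^{-1}). -/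

import Mathlib

open Real Finset Filter

noncomputable section

/-- The intensity `λ_i(β) = exp(β_0 + Σ_{j=1}^k x_{ij} β_j)`. -/
def lam {k : ℕ} (x : ℕ → Fin k → ℝ) (β : Fin (k + 1) → ℝ) (i : ℕ) : ℝ :=
  Real.exp (β 0 + ∑ j : Fin k, x i j * β j.succ)

/-- The weighted Poisson point-process log-likelihood
`l_ppm(β; w) = Σ_{i=1}^n log λ_i(β) − Σ_{i=1}^m w_i λ_i(β)`
(points are indexed `0, …, m-1`, the presences being `0, …, n-1`). -/
def lppm {k : ℕ} (n m : ℕ) (x : ℕ → Fin k → ℝ) (w : ℕ → ℝ) (β : Fin (k + 1) → ℝ) : ℝ :=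
  (∑ i ∈ Finset.range n, Real.log (lam x β i)) - ∑ i ∈ Finset.range m, w i * lam x β i

/-- The vector `J_c = (log c, 0, …, 0) ∈ ℝ^{k+1}`. -/
def Jvec {k : ℕ} (c : ℝ) : Fin (k + 1) → ℝ := fun j => if j = 0 then Real.log c else 0


set_option maxHeartbeats 1000000 in
/-- Under the intercept-shifted parametrization `β = γ − J_m`, the pseudo-absence
logistic success probabilities `p_i(m)` (with
`log(p_i/(1−p_i)) = γ_0 − log(m−n) + Σ_j x_{ij} γ_j`) agree with the Poisson
point-process intensities `λ_i(γ − J_m)` uniformly to order `O(m^{-1})`: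
there are `C > 0` and `m₀` such that for all `m ≥ m₀`,
`|log p_i(m) − log λ_i(γ − J_m)| ≤ C/m` for every `i ≤ m`, and consequently
`|Σ_{i=1}^m p_i(m) − Σ_{i=1}^m λ_i(γ − J_m)| ≤ C/m`. -/
theorem stmt_14 {k : ℕ} (n : ℕ) (hn : 1 ≤ n) (γ : Fin (k + 1) → ℝ) (M : ℝ) (hM : 0 < M)
    (x : ℕ → Fin k → ℝ) (hx : ∀ i, ‖x i‖ ≤ M)
    (p : ℕ → ℕ → ℝ)
    (hp01 : ∀ m, n < m → ∀ i < m, p m i ∈ Set.Ioo (0 : ℝ) 1)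
    (hlogit : ∀ m, n < m → ∀ i < m,
      Real.log (p m i / (1 - p m i)) =
        γ 0 - Real.log ((m : ℝ) - n) + ∑ j : Fin k, x i j * γ j.succ) :
    ∃ C > (0 : ℝ), ∃ m₀ : ℕ, n < m₀ ∧ ∀ m ≥ m₀,
      (∀ i < m,
          |Real.log (p m i) - Real.log (lam x (γ - Jvec (m : ℝ)) i)| ≤ C / m) ∧
        |(∑ i ∈ Finset.range m, p m i) -
            ∑ i ∈ Finset.range m, lam x (γ - Jvec (m : ℝ)) i| ≤ C / m := by
  classical
  set K := M * ∑ j : Fin k, |γ j.succ| with hKdef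
  have hK0 : 0 ≤ K := by
    apply mul_nonneg hM.le
    exact Finset.sum_nonneg fun j _ => abs_nonneg _
  set A := Real.exp (|γ 0| + K) with hAdef
  have hA0 : 0 < A := Real.exp_pos _
  have hA1 : 1 ≤ A := by
    rw [hAdef]
    calc (1:ℝ) = Real.exp 0 := Real.exp_zero.symm
    _ ≤ _ := Real.exp_le_exp.mpr (by positivity)
  set s : ℕ → ℝ := fun i => ∑ j : Fin k, x i j * γ j.succ with hsdef
  have hs : ∀ i, |s i| ≤ K := by
    intro i
    calc |s i| ≤ ∑ j : Fin k, |x i j * γ j.succ| := Finset.abs_sum_le_sum_abs _ _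
    _ ≤ ∑ j : Fin k, M * |γ j.succ| := by
        apply Finset.sum_le_sum
        intro j _
        rw [abs_mul]
        exact mul_le_mul_of_nonneg_right
          (le_trans (norm_le_pi_norm (x i) j) (hx i)) (abs_nonneg _)
    _ = K := by rw [hKdef, Finset.mul_sum]
  have ha_le : ∀ i, Real.exp (γ 0 + s i) ≤ A := fun i =>
    Real.exp_le_exp.mpr (by
      have h1 := (abs_le.mp (hs i)).2
      have h2 := le_abs_self (γ 0)
      linarith)
  have ha_pos : ∀ i, 0 < Real.exp (γ 0 + s i) := fun i => Real.exp_pos _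
  have hn0 : (0:ℝ) ≤ n := Nat.cast_nonneg n
  refine ⟨2 * ((n:ℝ) + A) * (1 + A), by positivity, 2 * n, by omega, ?_⟩
  intro m hm
  have hnm : n < m := by omega
  have hm0 : (0:ℝ) < m := by
    have : 0 < m := by omega
    exact_mod_cast this
  have hd : (0:ℝ) < (m:ℝ) - n := by
    have : (n:ℝ) < m := by exact_mod_cast hnm
    linarith
  have hmd : (m:ℝ) ≤ 2 * ((m:ℝ) - n) := by
    have h2n : ((2*n:ℕ):ℝ) ≤ m := by exact_mod_cast hm
    push_cast at h2n
    linarith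
  have hjs : ∀ j : Fin k, Jvec (k := k) (m:ℝ) j.succ = 0 := fun j => by
    simp [Jvec, Fin.succ_ne_zero]
  have hj0 : Jvec (k := k) (m:ℝ) 0 = Real.log m := by simp [Jvec]
  have hlamval : ∀ i, lam x (γ - Jvec (m:ℝ)) i = Real.exp (γ 0 + s i) / m := by
    intro i
    have heq : lam x (γ - Jvec (m:ℝ)) i = Real.exp (γ 0 - Real.log m + s i) := by
      simp only [lam, Pi.sub_apply, hjs, hj0, sub_zero, hsdef]
    rw [heq, show γ 0 - Real.log m + s i = (γ 0 + s i) - Real.log m by ring,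
      Real.exp_sub, Real.exp_log hm0]
  have hlamlog : ∀ i, Real.log (lam x (γ - Jvec (m:ℝ)) i) = γ 0 - Real.log m + s i := by
    intro i
    rw [hlamval i, Real.log_div (ne_of_gt (ha_pos i)) (ne_of_gt hm0), Real.log_exp]
    ring
  have key : ∀ i < m,
      |Real.log (p m i) - Real.log (lam x (γ - Jvec (m:ℝ)) i)|
        ≤ 2 * ((n:ℝ) + A) * (1 + A) / m ∧
      |p m i - lam x (γ - Jvec (m:ℝ)) i|
        ≤ A * ((n:ℝ) + A) / (((m:ℝ) - n) * m) := by
    intro i hi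
    obtain ⟨hp0, hp1⟩ := hp01 m hnm i hi
    set η := γ 0 - Real.log ((m:ℝ) - n) + s i with hηdef
    have heη : Real.exp η = Real.exp (γ 0 + s i) / ((m:ℝ) - n) := by
      rw [hηdef, show γ 0 - Real.log ((m:ℝ) - n) + s i
        = (γ 0 + s i) - Real.log ((m:ℝ) - n) by ring, Real.exp_sub, Real.exp_log hd]
    have h1p : (0:ℝ) < 1 - p m i := by linarith
    have hratio : p m i / (1 - p m i) = Real.exp η := by
      have hpos : 0 < p m i / (1 - p m i) := div_pos hp0 h1p
      have hl := hlogit m hnm i hi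
      calc p m i / (1 - p m i) = Real.exp (Real.log (p m i / (1 - p m i))) :=
            (Real.exp_log hpos).symm
      _ = Real.exp η := by rw [hl]
    have hratio' : p m i = Real.exp η * (1 - p m i) := by
      rw [div_eq_iff (ne_of_gt h1p)] at hratio
      exact hratio
    have hsolve : p m i = Real.exp η / (1 + Real.exp η) := by
      rw [eq_div_iff (by positivity)]
      nlinarith [hratio']
    have hlogp : Real.log (p m i) = η - Real.log (1 + Real.exp η) := by
      rw [hsolve, Real.log_div (Real.exp_ne_zero η) (by positivity), Real.log_exp]
    constructor
    · have hform : Real.log (p m i) - Real.log (lam x (γ - Jvec (m:ℝ)) i)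
          = (Real.log m - Real.log ((m:ℝ) - n)) - Real.log (1 + Real.exp η) := by
        rw [hlogp, hlamlog i, hηdef]; ring
      have ht1a : 0 ≤ Real.log m - Real.log ((m:ℝ) - n) :=
        sub_nonneg.mpr (Real.log_le_log hd (by linarith))
      have ht1b : Real.log m - Real.log ((m:ℝ) - n) ≤ (n:ℝ) / ((m:ℝ) - n) := by
        rw [← Real.log_div (ne_of_gt hm0) (ne_of_gt hd)]
        have h := Real.log_le_sub_one_of_pos (div_pos hm0 hd)
        have heq2 : (m:ℝ) / ((m:ℝ) - n) - 1 = (n:ℝ) / ((m:ℝ) - n) := by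
          field_simp
          ring
        linarith
      have ht2a : 0 ≤ Real.log (1 + Real.exp η) :=
        Real.log_nonneg (by linarith [Real.exp_pos η])
      have ht2b : Real.log (1 + Real.exp η) ≤ A / ((m:ℝ) - n) := by
        have h := Real.log_le_sub_one_of_pos (show (0:ℝ) < 1 + Real.exp η by positivity)
        have he : Real.exp η ≤ A / ((m:ℝ) - n) := by
          rw [heη]
          exact div_le_div₀ hA0.le (ha_le i) hd le_rfl
        linarith
      have hnd : (0:ℝ) ≤ (n:ℝ) / ((m:ℝ) - n) := by positivity
      have hAd : (0:ℝ) ≤ A / ((m:ℝ) - n) := by positivity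
      rw [hform]
      have habs : |(Real.log m - Real.log ((m:ℝ) - n)) - Real.log (1 + Real.exp η)|
          ≤ (n:ℝ) / ((m:ℝ) - n) + A / ((m:ℝ) - n) := by
        rw [abs_le]
        constructor <;> linarith
      have hfin : (n:ℝ) / ((m:ℝ) - n) + A / ((m:ℝ) - n)
          ≤ 2 * ((n:ℝ) + A) * (1 + A) / m := by
        rw [← add_div, div_le_div_iff₀ hd hm0]
        nlinarith [mul_le_mul_of_nonneg_left hmd (show (0:ℝ) ≤ (n:ℝ) + A by linarith),
          mul_nonneg (mul_nonneg (show (0:ℝ) ≤ 2*((n:ℝ)+A) by linarith)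
            (show (0:ℝ) ≤ A by linarith)) (show (0:ℝ) ≤ (m:ℝ) - n by linarith)]
      linarith
    · have hpval : p m i
          = Real.exp (γ 0 + s i) / (((m:ℝ) - n) + Real.exp (γ 0 + s i)) := by
        rw [hsolve, heη]
        rw [div_eq_div_iff (by positivity) (by positivity)]
        field_simp
      have hdiff : p m i - lam x (γ - Jvec (m:ℝ)) i
          = Real.exp (γ 0 + s i) * ((n:ℝ) - Real.exp (γ 0 + s i))
            / ((((m:ℝ) - n) + Real.exp (γ 0 + s i)) * m) := by
        rw [hpval, hlamval i]
        rw [div_sub_div _ _ (by positivity) (ne_of_gt hm0)]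
        congr 1
        ring
      rw [hdiff, abs_div, abs_mul]
      rw [abs_of_pos (ha_pos i),
        abs_of_pos (show (0:ℝ) < (((m:ℝ) - n) + Real.exp (γ 0 + s i)) * m from
          mul_pos (by linarith [ha_pos i]) hm0)]
      apply div_le_div₀ (by positivity)
      · apply mul_le_mul (ha_le i) _ (abs_nonneg _) hA0.le
        rw [abs_le]
        constructor <;> [linarith [ha_le i]; linarith [ha_pos i]]
      · exact mul_pos hd hm0
      · exact mul_le_mul_of_nonneg_right (by linarith [ha_pos i]) hm0.le
  refine ⟨fun i hi => (key i hi).1, ?_⟩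
  rw [← Finset.sum_sub_distrib]
  have hsum : |∑ i ∈ Finset.range m, (p m i - lam x (γ - Jvec (m:ℝ)) i)|
      ≤ (m:ℝ) * (A * ((n:ℝ) + A) / (((m:ℝ) - n) * m)) := by
    calc |∑ i ∈ Finset.range m, (p m i - lam x (γ - Jvec (m:ℝ)) i)|
        ≤ ∑ i ∈ Finset.range m, |p m i - lam x (γ - Jvec (m:ℝ)) i| :=
          Finset.abs_sum_le_sum_abs _ _
    _ ≤ (Finset.range m).card • (A * ((n:ℝ) + A) / (((m:ℝ) - n) * m)) :=
          Finset.sum_le_card_nsmul _ _ _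
            (fun i hi => (key i (Finset.mem_range.mp hi)).2)
    _ = (m:ℝ) * (A * ((n:ℝ) + A) / (((m:ℝ) - n) * m)) := by
          rw [Finset.card_range, nsmul_eq_mul]
  have hsimp : (m:ℝ) * (A * ((n:ℝ) + A) / (((m:ℝ) - n) * m))
      = A * ((n:ℝ) + A) / ((m:ℝ) - n) := by
    field_simp
  have hfin2 : A * ((n:ℝ) + A) / ((m:ℝ) - n) ≤ 2 * ((n:ℝ) + A) * (1 + A) / m := by
    rw [div_le_div_iff₀ hd hm0]
    nlinarith [mul_le_mul_of_nonneg_left hmd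
        (show (0:ℝ) ≤ (1 + A) * ((n:ℝ) + A) by positivity),
      mul_le_mul_of_nonneg_right (show A ≤ 1 + A by linarith)
        (mul_nonneg (show (0:ℝ) ≤ (n:ℝ) + A by linarith) hm0.le)]
  rw [hsimp] at hsum
  linarith
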